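/- The function φ(x) = 1 + 2(x+1)(1+1/x)^x is strictly increasing on the positive reals. -/

import Mathlib

open Real

noncomputable def phi (x : ℝ) : ℝ := 1 + 2 * (x + 1) * (1 + 1 / x) ^ x

noncomputable def gphi (x : ℝ) : ℝ := (x + 1) * Real.log (x + 1) - x * Real.log x

lemma gphi_hasDeriv {x : ℝ} (hx : 0 < x) :
    HasDerivAt gphi (Real.log (x + 1) - Real.log x) x := by
  have h1 : HasDerivAt (fun y : ℝ => (y + 1) * Real.log (y + 1))
      ((Real.log (x + 1) + 1) * 1) x := by
    exact (Real.hasDerivAt_mul_log (by linarith : x + 1 ≠ 0)).comp x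
      ((hasDerivAt_id x).add_const 1)
  have h2 : HasDerivAt (fun y : ℝ => y * Real.log y) (Real.log x + 1) x :=
    Real.hasDerivAt_mul_log hx.ne'
  have := h1.sub h2
  rw [show Real.log (x + 1) - Real.log x = (Real.log (x + 1) + 1) * 1 - (Real.log x + 1) by ring]
  exact this

lemma gphi_mono : StrictMonoOn gphi (Set.Ioi (0 : ℝ)) := by
  apply strictMonoOn_of_deriv_pos (convex_Ioi 0)
  · have : Continuous gphi := by
      have h := Real.continuous_mul_log
      exact (h.comp (continuous_id.add continuous_const)).sub h
    exact this.continuousOn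
  · intro x hx
    rw [interior_Ioi] at hx
    rw [(gphi_hasDeriv hx).deriv]
    have : Real.log x < Real.log (x + 1) := Real.log_lt_log hx (by linarith)
    linarith

lemma phi_eq {x : ℝ} (hx : 0 < x) : phi x = 1 + 2 * Real.exp (gphi x) := by
  have hx1 : (0:ℝ) < 1 + 1 / x := by positivity
  have h1 : Real.log (1 + 1 / x) = Real.log (x + 1) - Real.log x := by
    rw [show (1:ℝ) + 1 / x = (x + 1) / x by field_simp, Real.log_div (by linarith) hx.ne']
  have h2 : Real.exp (gphi x) = (x + 1) * Real.exp ((Real.log (x + 1) - Real.log x) * x) := by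
    rw [show gphi x = Real.log (x + 1) + (Real.log (x + 1) - Real.log x) * x by
      unfold gphi; ring, Real.exp_add, Real.exp_log (by linarith)]
  rw [phi, Real.rpow_def_of_pos hx1, h1, h2]
  ring

theorem phi_strictMonoOn : StrictMonoOn phi (Set.Ioi (0 : ℝ)) := by
  intro a ha b hb hab
  rw [phi_eq ha, phi_eq hb]
  have h := gphi_mono ha hb hab
  have := Real.exp_lt_exp.mpr h
  linarith
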